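/- Let A and Θ be types, u : A → Θ → ℝ, θ : ℕ → Θ a sequence of parameters, and T a natural number. Suppose L : ℕ → A is a 'leader' selection satisfying: for every t with 1 ≤ t ≤ T and every a ∈ A, ∑_{τ=1}^{t} u(L(t), θ(τ)) ≥ ∑_{τ=1}^{t} u(a, θ(τ)). Then for every a* ∈ A, ∑_{t=1}^{T} u(L(t), θ(t)) ≥ ∑_{t=1}^{T} u(a*, θ(t)). -/

import Mathlib

/-- **Be-the-leader lemma.** If `L t` maximizes the cumulative utility of the first `t`
parameters (including the current one), then `L` has no regret against any fixed action. -/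
theorem be_the_leader {A Θ : Type*} (u : A → Θ → ℝ) (θ : ℕ → Θ) (T : ℕ) (L : ℕ → A)
    (hL : ∀ t, 1 ≤ t → t ≤ T → ∀ a : A,
      ∑ τ ∈ Finset.Icc 1 t, u (L t) (θ τ) ≥ ∑ τ ∈ Finset.Icc 1 t, u a (θ τ)) :
    ∀ a : A, ∑ t ∈ Finset.Icc 1 T, u (L t) (θ t) ≥ ∑ t ∈ Finset.Icc 1 T, u a (θ t) := by
  induction T with
  | zero => simp
  | succ T ih =>
    intro a
    have ih' := ih (fun t h1 h2 a => hL t h1 (h2.trans (Nat.le_succ T)) a)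
    have key : ∑ t ∈ Finset.Icc 1 (T+1), u (L t) (θ t)
        ≥ ∑ t ∈ Finset.Icc 1 (T+1), u (L (T+1)) (θ t) := by
      rw [Finset.sum_Icc_succ_top (Nat.succ_le_succ (Nat.zero_le T)),
        Finset.sum_Icc_succ_top (Nat.succ_le_succ (Nat.zero_le T))]
      exact add_le_add_left (ih' (L (T+1))) _
    exact le_trans (hL (T+1) (Nat.succ_le_succ (Nat.zero_le T)) le_rfl a) key
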